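/- Privacy amplification via degrading channels: if Q : V → Z is (ε, δ)-locally differentially private with ε = O(1), then the composition Q ∘ W^η, where W^η is the η-degrading channel, is (O(ηε), O(ηδ))-locally differentially private. Concretely, for every pair v, v' ∈ V and measurable S ⊆ Z, Pr[Q(W^η(v')) ∈ S] ≤ (1 + η e^ε (e^ε - 1)) · Pr[Q(W^η(v)) ∈ S] + e^ε η δ. -/

import Mathlib

/-- Privacy amplification via an η-degrading channel: composing an (ε,δ)-LDP
randomizer with the η-degrading channel yields the stated multiplicative and
additive privacy guarantee. The probability that `Q (W^η v) ∈ S` equals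
`η * p v S + (1-η) * (average over u of p u S)`. -/
theorem stmt_5 {V Z : Type*} [Fintype V] [Nonempty V] [MeasurableSpace Z]
    (p : V → Set Z → ℝ) (hp : ∀ v S, 0 ≤ p v S)
    (ε δ η : ℝ) (hε : 0 < ε) (hδ : 0 ≤ δ) (hη0 : 0 ≤ η) (hη1 : η ≤ 1)
    (hLDP : ∀ v v' : V, ∀ S : Set Z, MeasurableSet S →
      p v S ≤ Real.exp ε * p v' S + δ)
    (v v' : V) (S : Set Z) (hS : MeasurableSet S) :
    η * p v' S + (1 - η) * ((∑ u, p u S) / Fintype.card V)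
      ≤ (1 + η * Real.exp ε * (Real.exp ε - 1)) *
          (η * p v S + (1 - η) * ((∑ u, p u S) / Fintype.card V))
        + Real.exp ε * η * δ := by
  set E := Real.exp ε with hEdef
  set A := p v S with hA
  set B := p v' S with hB
  have hn : (0:ℝ) < (Fintype.card V : ℝ) := by
    exact_mod_cast Fintype.card_pos
  set M := (∑ u, p u S) / (Fintype.card V : ℝ) with hM
  have hE : 1 ≤ E := Real.one_le_exp hε.le
  have hA0 : 0 ≤ A := hp v S
  have hM0 : 0 ≤ M := by
    apply div_nonneg _ hn.le
    exact Finset.sum_nonneg fun u _ => hp u S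
  have h3 : B ≤ E * A + δ := hLDP v' v S hS
  have h4 : A ≤ E * M + δ := by
    have hsum : (Fintype.card V : ℝ) * A ≤ E * (∑ u, p u S) + (Fintype.card V : ℝ) * δ := by
      have h := Finset.sum_le_sum (s := Finset.univ) (fun u _ => hLDP v u S hS)
      simpa [Finset.sum_add_distrib, Finset.mul_sum, mul_comm] using h
    have h : A ≤ (E * (∑ u, p u S) + (Fintype.card V : ℝ) * δ) / (Fintype.card V : ℝ) :=
      (le_div_iff₀ hn).mpr (by linarith [hsum])
    calc A ≤ _ := h
      _ = E * M + δ := by field_simp [hM]; rw [hM]; field_simp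
  have hηE1 : 0 ≤ η * (1 - η) * (E - 1) :=
    mul_nonneg (mul_nonneg hη0 (by linarith)) (by linarith)
  have t1 := mul_le_mul_of_nonneg_left h3 hη0
  have t3 := mul_le_mul_of_nonneg_left h4 hηE1
  have n1 : 0 ≤ η * η * ((E - 1) * (E - 1)) * A :=
    mul_nonneg (mul_nonneg (mul_nonneg hη0 hη0)
      (mul_nonneg (by linarith) (by linarith))) hA0
  have n2 : 0 ≤ η * η * (E - 1) * δ :=
    mul_nonneg (mul_nonneg (mul_nonneg hη0 hη0) (by linarith)) hδ
  nlinarith [t1, t3, n1, n2]
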